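/- Let p be a probability density on ℝ, let M > 0, and let f, f_0: ℝ → ℝ be measurable with sup_x |f(x)| ≤ M and sup_x |f_0(x)| ≤ M. Let ψ_f and ψ_{f_0} be probability densities that are invariant for f and f_0 respectively, and assume ρ := (1/2) sup_{x_1, x_2 ∈ [−M, M]} ∫ |p(x − x_1) − p(x − x_2)| dx < 1. Then ∫ |ψ_f(x) − ψ_{f_0}(x)| dx ≤ (1 − ρ)^{−1} · sup_{u ∈ [0, ‖f − f_0‖_∞]} ∫ |p(x) − p(x − u)| dx, where ‖f − f_0‖_∞ = sup_x |f(x) − f_0(x)|. -/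

import Mathlib

open MeasureTheory Real
open scoped ENNReal

private lemma my_integrable_of_integral_one {h : ℝ → ℝ}
    (hint : ∫ x, h x = 1) : Integrable h (volume : Measure ℝ) := by
  by_contra hc
  rw [integral_undef hc] at hint
  norm_num at hint

private lemma my_shift_integral_abs (p : ℝ → ℝ) (a b : ℝ) :
    ∫ x, |p (x - a) - p (x - b)| = ∫ x, |p x - p (x - (b - a))| := by
  have h := integral_sub_right_eq_self (μ := (volume : Measure ℝ))
      (fun x => |p x - p (x - (b - a))|) a
  rw [← h]
  congr 1
  funext x
  have hx : x - a - (b - a) = x - b := by ring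
  rw [hx]

theorem l1_stationary_densities
    (p : ℝ → ℝ) (hp_meas : Measurable p) (hp_nonneg : ∀ x, 0 ≤ p x)
    (hp_int : ∫ x, p x = 1)
    (M : ℝ) (hM : 0 < M)
    (f f0 : ℝ → ℝ) (hf_meas : Measurable f) (hf0_meas : Measurable f0)
    (hf_bdd : ∀ x, |f x| ≤ M) (hf0_bdd : ∀ x, |f0 x| ≤ M)
    (ψf ψf0 : ℝ → ℝ)
    (hψf_meas : Measurable ψf) (hψf_nonneg : ∀ x, 0 ≤ ψf x) (hψf_int : ∫ x, ψf x = 1)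
    (hψf0_meas : Measurable ψf0) (hψf0_nonneg : ∀ x, 0 ≤ ψf0 x) (hψf0_int : ∫ x, ψf0 x = 1)
    (hinv_f : ∀ᵐ x ∂(volume : Measure ℝ), ψf x = ∫ y, p (x - f y) * ψf y)
    (hinv_f0 : ∀ᵐ x ∂(volume : Measure ℝ), ψf0 x = ∫ y, p (x - f0 y) * ψf0 y)
    (ρ : ℝ)
    (hρ_def : ρ = sSup ((fun q : ℝ × ℝ => (1 / 2) * ∫ x, |p (x - q.1) - p (x - q.2)|) ''
        (Set.Icc (-M) M ×ˢ Set.Icc (-M) M)))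
    (hρ_lt_one : ρ < 1) :
    ∫ x, |ψf x - ψf0 x|
      ≤ (1 - ρ)⁻¹ *
        sSup ((fun u : ℝ => ∫ x, |p x - p (x - u)|) ''
          Set.Icc 0 (⨆ x, |f x - f0 x|)) := by
  classical
  set N := ⨆ x, |f x - f0 x| with hNdef
  set S := sSup ((fun u : ℝ => ∫ x, |p x - p (x - u)|) '' Set.Icc 0 N) with hSdef
  set D := ∫ x, |ψf x - ψf0 x| with hDdef
  -- basic integrability
  have hp_int' : Integrable p (volume : Measure ℝ) := my_integrable_of_integral_one hp_int
  have hψf_int' : Integrable ψf (volume : Measure ℝ) := my_integrable_of_integral_one hψf_int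
  have hψf0_int' : Integrable ψf0 (volume : Measure ℝ) := my_integrable_of_integral_one hψf0_int
  have hP1 : ∫⁻ x, ENNReal.ofReal (p x) = 1 := by
    rw [← ofReal_integral_eq_lintegral_ofReal hp_int' (Filter.Eventually.of_forall hp_nonneg),
      hp_int, ENNReal.ofReal_one]
  have hΨ1 : ∫⁻ x, ENNReal.ofReal (ψf x) = 1 := by
    rw [← ofReal_integral_eq_lintegral_ofReal hψf_int' (Filter.Eventually.of_forall hψf_nonneg),
      hψf_int, ENNReal.ofReal_one]
  have hΨ01 : ∫⁻ x, ENNReal.ofReal (ψf0 x) = 1 := by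
    rw [← ofReal_integral_eq_lintegral_ofReal hψf0_int' (Filter.Eventually.of_forall hψf0_nonneg),
      hψf0_int, ENNReal.ofReal_one]
  -- facts about the "total variation" integrals
  have hT_int : ∀ a b : ℝ, Integrable (fun x => |p (x - a) - p (x - b)|) (volume : Measure ℝ) :=
    fun a b => ((hp_int'.comp_sub_right a).sub (hp_int'.comp_sub_right b)).abs
  have hT_nonneg : ∀ a b : ℝ, 0 ≤ ∫ x, |p (x - a) - p (x - b)| :=
    fun a b => integral_nonneg fun x => abs_nonneg _
  have hshift1 : ∀ c : ℝ, ∫ x, p (x - c) = 1 := by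
    intro c
    rw [integral_sub_right_eq_self p c, hp_int]
  have hT2 : ∀ a b : ℝ, (∫ x, |p (x - a) - p (x - b)|) ≤ 2 := by
    intro a b
    have h1 : (∫ x, |p (x - a) - p (x - b)|) ≤ ∫ x, (p (x - a) + p (x - b)) := by
      refine integral_mono (hT_int a b)
        ((hp_int'.comp_sub_right a).add (hp_int'.comp_sub_right b)) (fun x => ?_)
      calc |p (x - a) - p (x - b)| ≤ |p (x - a)| + |p (x - b)| := abs_sub _ _
        _ = p (x - a) + p (x - b) := by
            rw [abs_of_nonneg (hp_nonneg _), abs_of_nonneg (hp_nonneg _)]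
    have h2 : ∫ x, (p (x - a) + p (x - b)) = 2 := by
      rw [integral_add (hp_int'.comp_sub_right a) (hp_int'.comp_sub_right b),
        hshift1, hshift1]
      norm_num
    linarith
  have hTsymm : ∀ a b : ℝ, ∫ x, |p (x - a) - p (x - b)| = ∫ x, |p (x - b) - p (x - a)| := by
    intro a b
    congr 1
    funext x
    exact abs_sub_comm _ _
  -- ρ facts
  have hρ_bdd : BddAbove ((fun q : ℝ × ℝ => (1 / 2) * ∫ x, |p (x - q.1) - p (x - q.2)|) ''
      (Set.Icc (-M) M ×ˢ Set.Icc (-M) M)) := by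
    refine ⟨1, ?_⟩
    rintro r ⟨q, _, rfl⟩
    have := hT2 q.1 q.2
    linarith
  have hρ2 : ∀ a b : ℝ, |a| ≤ M → |b| ≤ M → (∫ x, |p (x - a) - p (x - b)|) ≤ 2 * ρ := by
    intro a b ha hb
    rw [abs_le] at ha hb
    have hmem : ((a, b) : ℝ × ℝ) ∈ Set.Icc (-M) M ×ˢ Set.Icc (-M) M := ⟨ha, hb⟩
    have h := le_csSup hρ_bdd (Set.mem_image_of_mem _ hmem)
    rw [← hρ_def] at h
    simp only at h
    linarith
  have hρ_nonneg : 0 ≤ ρ := by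
    have h0 : |(0:ℝ)| ≤ M := by simpa using hM.le
    have := hρ2 0 0 h0 h0
    have hz : (∫ x, |p (x - (0:ℝ)) - p (x - (0:ℝ))|) = 0 := by simp
    rw [hz] at this
    linarith
  -- S facts
  have hN_bdd : ∀ y : ℝ, |f y - f0 y| ≤ N := by
    intro y
    rw [hNdef]
    refine le_ciSup (f := fun z => |f z - f0 z|) ⟨2 * M, ?_⟩ y
    rintro r ⟨z, rfl⟩
    calc |f z - f0 z| ≤ |f z| + |f0 z| := abs_sub _ _
      _ ≤ 2 * M := by linarith [hf_bdd z, hf0_bdd z]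
  have hN_nonneg : 0 ≤ N := Real.iSup_nonneg fun x => abs_nonneg _
  have hS_bdd : BddAbove ((fun u : ℝ => ∫ x, |p x - p (x - u)|) '' Set.Icc 0 N) := by
    refine ⟨2, ?_⟩
    rintro r ⟨u, _, rfl⟩
    have := hT2 0 u
    simpa using this
  have hS_ge : ∀ u : ℝ, 0 ≤ u → u ≤ N → (∫ x, |p x - p (x - u)|) ≤ S := by
    intro u h0 h1
    exact le_csSup hS_bdd (Set.mem_image_of_mem _ ⟨h0, h1⟩)
  have hS_nonneg : 0 ≤ S := by
    have h := hS_ge 0 le_rfl hN_nonneg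
    simpa using h
  have hTS : ∀ y : ℝ, (∫ x, |p (x - f y) - p (x - f0 y)|) ≤ S := by
    intro y
    rcases le_total (f y) (f0 y) with h | h
    · rw [my_shift_integral_abs]
      refine hS_ge _ (by linarith) ?_
      calc f0 y - f y ≤ |f y - f0 y| := by
            rw [abs_sub_comm]; exact le_abs_self _
        _ ≤ N := hN_bdd y
    · rw [hTsymm, my_shift_integral_abs]
      refine hS_ge _ (by linarith) ?_
      calc f y - f0 y ≤ |f y - f0 y| := le_abs_self _
        _ ≤ N := hN_bdd y
  -- decomposition of the difference
  have hg_int : Integrable (fun x => ψf x - ψf0 x) (volume : Measure ℝ) :=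
    hψf_int'.sub hψf0_int'
  have hD_nonneg : 0 ≤ D := integral_nonneg fun x => abs_nonneg _
  -- a.e. integrability of kernels
  have haeint : ∀ (h : ℝ → ℝ), Measurable h → ∀ (ψ : ℝ → ℝ), Measurable ψ →
      (∀ x, 0 ≤ ψ x) → (∫⁻ y, ENNReal.ofReal (ψ y) = 1) →
      ∀ᵐ x ∂(volume : Measure ℝ), Integrable (fun y => p (x - h y) * ψ y) volume := by
    intro h hh ψ hψm hψn hψ1
    have hjm : Measurable fun z : ℝ × ℝ =>
        ENNReal.ofReal (p (z.1 - h z.2)) * ENNReal.ofReal (ψ z.2) :=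
      ((hp_meas.comp (measurable_fst.sub (hh.comp measurable_snd))).ennreal_ofReal).mul
        ((hψm.comp measurable_snd).ennreal_ofReal)
    have htot : ∫⁻ x, ∫⁻ y, ENNReal.ofReal (p (x - h y)) * ENNReal.ofReal (ψ y) = 1 := by
      rw [lintegral_lintegral_swap hjm.aemeasurable]
      have hy : ∀ y : ℝ, ∫⁻ x, ENNReal.ofReal (p (x - h y)) * ENNReal.ofReal (ψ y)
          = ENNReal.ofReal (ψ y) := by
        intro y
        have hm : Measurable fun x : ℝ => ENNReal.ofReal (p (x - h y)) :=
          (hp_meas.comp (measurable_sub_const (h y))).ennreal_ofReal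
        rw [lintegral_mul_const _ hm,
          lintegral_sub_right_eq_self (fun x => ENNReal.ofReal (p x)) (h y), hP1, one_mul]
      simp_rw [hy]
      exact hψ1
    have hmx : Measurable fun x : ℝ =>
        ∫⁻ y, ENNReal.ofReal (p (x - h y)) * ENNReal.ofReal (ψ y) :=
      hjm.lintegral_prod_right'
    have hfin : ∀ᵐ x ∂(volume : Measure ℝ),
        (∫⁻ y, ENNReal.ofReal (p (x - h y)) * ENNReal.ofReal (ψ y)) < ∞ :=
      ae_lt_top hmx (by rw [htot]; exact ENNReal.one_ne_top)
    filter_upwards [hfin] with x hx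
    refine ⟨((hp_meas.comp (measurable_const.sub hh)).mul hψm).aestronglyMeasurable, ?_⟩
    rw [hasFiniteIntegral_iff_ofReal
      (Filter.Eventually.of_forall fun y => mul_nonneg (hp_nonneg _) (hψn y))]
    simpa [ENNReal.ofReal_mul (hp_nonneg _)] using hx
  -- the two pieces
  set A : ℝ → ℝ := fun x => ∫ y, (p (x - f y) - p (x - f0 y)) * ψf y with hAdef
  set B : ℝ → ℝ := fun x => ∫ y, p (x - f0 y) * (ψf y - ψf0 y) with hBdef
  have hdecomp : ∀ᵐ x ∂(volume : Measure ℝ), ψf x - ψf0 x = A x + B x := by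
    filter_upwards [hinv_f, hinv_f0, haeint f hf_meas ψf hψf_meas hψf_nonneg hΨ1,
      haeint f0 hf0_meas ψf hψf_meas hψf_nonneg hΨ1,
      haeint f0 hf0_meas ψf0 hψf0_meas hψf0_nonneg hΨ01] with x h1 h2 h3 h4 h5
    have e1 : ∫ y, (p (x - f y) - p (x - f0 y)) * ψf y
        = (∫ y, p (x - f y) * ψf y) - ∫ y, p (x - f0 y) * ψf y := by
      rw [← integral_sub h3 h4]
      congr 1
      funext y
      ring
    have e2 : ∫ y, p (x - f0 y) * (ψf y - ψf0 y)
        = (∫ y, p (x - f0 y) * ψf y) - ∫ y, p (x - f0 y) * ψf0 y := by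
      rw [← integral_sub h4 h5]
      congr 1
      funext y
      ring
    simp only [hAdef, hBdef]
    rw [e1, e2]
    linarith [h1, h2]
  -- measurability of A and B
  have hAm : Measurable A := by
    have hj : Measurable fun z : ℝ × ℝ => (p (z.1 - f z.2) - p (z.1 - f0 z.2)) * ψf z.2 :=
      (((hp_meas.comp (measurable_fst.sub (hf_meas.comp measurable_snd)))).sub
        ((hp_meas.comp (measurable_fst.sub (hf0_meas.comp measurable_snd))))).mul
        (hψf_meas.comp measurable_snd)
    exact hj.stronglyMeasurable.integral_prod_right'.measurable
  have hBm : Measurable B := by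
    have hj : Measurable fun z : ℝ × ℝ => p (z.1 - f0 z.2) * (ψf z.2 - ψf0 z.2) :=
      ((hp_meas.comp (measurable_fst.sub (hf0_meas.comp measurable_snd)))).mul
        ((hψf_meas.comp measurable_snd).sub (hψf0_meas.comp measurable_snd))
    exact hj.stronglyMeasurable.integral_prod_right'.measurable
  -- Step A : perturbation bound
  have hA : ∫⁻ x, ENNReal.ofReal |A x| ≤ ENNReal.ofReal S := by
    have hjm : Measurable fun z : ℝ × ℝ =>
        ENNReal.ofReal |p (z.1 - f z.2) - p (z.1 - f0 z.2)| * ENNReal.ofReal (ψf z.2) :=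
      ((((hp_meas.comp (measurable_fst.sub (hf_meas.comp measurable_snd))).sub
        (hp_meas.comp (measurable_fst.sub (hf0_meas.comp measurable_snd)))).abs).ennreal_ofReal).mul
        ((hψf_meas.comp measurable_snd).ennreal_ofReal)
    have hpt : ∀ x : ℝ, ENNReal.ofReal |A x|
        ≤ ∫⁻ y, ENNReal.ofReal |p (x - f y) - p (x - f0 y)| * ENNReal.ofReal (ψf y) := by
      intro x
      rw [← Real.enorm_eq_ofReal_abs]
      simp only [hAdef]
      refine le_trans (enorm_integral_le_lintegral_enorm _) (le_of_eq ?_)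
      refine lintegral_congr fun y => ?_
      rw [enorm_mul, Real.enorm_eq_ofReal_abs, Real.enorm_eq_ofReal_abs,
        abs_of_nonneg (hψf_nonneg y)]
    calc ∫⁻ x, ENNReal.ofReal |A x|
        ≤ ∫⁻ x, ∫⁻ y, ENNReal.ofReal |p (x - f y) - p (x - f0 y)| * ENNReal.ofReal (ψf y) :=
          lintegral_mono hpt
      _ = ∫⁻ y, ∫⁻ x, ENNReal.ofReal |p (x - f y) - p (x - f0 y)| * ENNReal.ofReal (ψf y) :=
          lintegral_lintegral_swap hjm.aemeasurable
      _ ≤ ∫⁻ y, ENNReal.ofReal S * ENNReal.ofReal (ψf y) := by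
          refine lintegral_mono fun y => ?_
          have hm : Measurable fun x : ℝ => ENNReal.ofReal |p (x - f y) - p (x - f0 y)| :=
            (((hp_meas.comp (measurable_sub_const (f y))).sub
              (hp_meas.comp (measurable_sub_const (f0 y)))).abs).ennreal_ofReal
          rw [lintegral_mul_const _ hm,
            ← ofReal_integral_eq_lintegral_ofReal (hT_int (f y) (f0 y))
              (Filter.Eventually.of_forall fun x => abs_nonneg _)]
          gcongr
          exact hTS y
      _ = ENNReal.ofReal S := by
          rw [lintegral_const_mul _ hψf_meas.ennreal_ofReal, hΨ1, mul_one]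
  -- Step B : contraction bound
  have hB : ∫⁻ x, ENNReal.ofReal |B x| ≤ ENNReal.ofReal ρ * ENNReal.ofReal D := by
    by_cases hD0 : D = 0
    · rw [hDdef] at hD0
      have h0 : (fun x => |ψf x - ψf0 x|) =ᵐ[(volume : Measure ℝ)] 0 :=
        (integral_eq_zero_iff_of_nonneg (fun x => abs_nonneg _) hg_int.abs).mp hD0
      have hB0 : ∀ x : ℝ, B x = 0 := by
        intro x
        have hz : (fun y => p (x - f0 y) * (ψf y - ψf0 y)) =ᵐ[(volume : Measure ℝ)]
            (fun _ => (0 : ℝ)) := by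
          filter_upwards [h0] with y hy
          simp only [Pi.zero_apply] at hy
          have : ψf y - ψf0 y = 0 := abs_eq_zero.mp hy
          simp [this]
        simp only [hBdef]
        rw [integral_congr_ae hz, integral_zero]
      simp only [hB0, abs_zero, ENNReal.ofReal_zero, lintegral_zero]
      exact zero_le
    · have hDpos : 0 < D := lt_of_le_of_ne hD_nonneg (Ne.symm hD0)
      set gp : ℝ → ℝ := fun x => max (ψf x - ψf0 x) 0 with hgpdef
      set gm : ℝ → ℝ := fun x => max (ψf0 x - ψf x) 0 with hgmdef
      have hgp_int : Integrable gp (volume : Measure ℝ) := hg_int.pos_part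
      have hgm_int : Integrable gm (volume : Measure ℝ) := (hψf0_int'.sub hψf_int').pos_part
      have hgp_nn : ∀ x, 0 ≤ gp x := fun x => le_max_right _ _
      have hgm_nn : ∀ x, 0 ≤ gm x := fun x => le_max_right _ _
      have hsum : ∀ x, gp x + gm x = |ψf x - ψf0 x| := by
        intro x
        rcases le_total (ψf0 x) (ψf x) with h | h
        · rw [hgpdef, hgmdef]
          simp only
          rw [max_eq_left (by linarith), max_eq_right (by linarith), abs_of_nonneg (by linarith)]
          ring
        · rw [hgpdef, hgmdef]
          simp only
          rw [max_eq_right (by linarith), max_eq_left (by linarith), abs_of_nonpos (by linarith)]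
          ring
      have hdiffpm : ∀ x, gp x - gm x = ψf x - ψf0 x := by
        intro x
        rcases le_total (ψf0 x) (ψf x) with h | h
        · rw [hgpdef, hgmdef]
          simp only
          rw [max_eq_left (by linarith), max_eq_right (by linarith)]
          ring
        · rw [hgpdef, hgmdef]
          simp only
          rw [max_eq_right (by linarith), max_eq_left (by linarith)]
          ring
      have h1sum : (∫ x, gp x) + ∫ x, gm x = D := by
        rw [← integral_add hgp_int hgm_int, hDdef]
        congr 1
        funext x
        exact hsum x
      have h2sum : (∫ x, gp x) - ∫ x, gm x = 0 := by
        rw [← integral_sub hgp_int hgm_int]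
        have he : ∫ x, (gp x - gm x) = ∫ x, (ψf x - ψf0 x) := by
          congr 1
          funext x
          exact hdiffpm x
        rw [he, integral_sub hψf_int' hψf0_int', hψf_int, hψf0_int]
        ring
      have hgpD : ∫ x, gp x = D / 2 := by linarith
      have hgmD : ∫ x, gm x = D / 2 := by linarith
      set Gp : ℝ → ℝ≥0∞ := fun x => ENNReal.ofReal (gp x) with hGpdef
      set Gm : ℝ → ℝ≥0∞ := fun x => ENNReal.ofReal (gm x) with hGmdef
      have hGpm : Measurable Gp := ((hψf_meas.sub hψf0_meas).max measurable_const).ennreal_ofReal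
      have hGmm : Measurable Gm := ((hψf0_meas.sub hψf_meas).max measurable_const).ennreal_ofReal
      set μp : Measure ℝ := (volume : Measure ℝ).withDensity Gp with hμpdef
      set μm : Measure ℝ := (volume : Measure ℝ).withDensity Gm with hμmdef
      have hGp_tot : ∫⁻ y, Gp y = ENNReal.ofReal (D / 2) := by
        rw [hGpdef]
        simp only
        rw [← ofReal_integral_eq_lintegral_ofReal hgp_int
          (Filter.Eventually.of_forall hgp_nn), hgpD]
      have hGm_tot : ∫⁻ y, Gm y = ENNReal.ofReal (D / 2) := by
        rw [hGmdef]
        simp only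
        rw [← ofReal_integral_eq_lintegral_ofReal hgm_int
          (Filter.Eventually.of_forall hgm_nn), hgmD]
      have hμp_univ : μp Set.univ = ENNReal.ofReal (D / 2) := by
        rw [hμpdef, withDensity_apply _ MeasurableSet.univ, setLIntegral_univ, hGp_tot]
      have hμm_univ : μm Set.univ = ENNReal.ofReal (D / 2) := by
        rw [hμmdef, withDensity_apply _ MeasurableSet.univ, setLIntegral_univ, hGm_tot]
      haveI hfinp : IsFiniteMeasure μp := ⟨by rw [hμp_univ]; exact ENNReal.ofReal_lt_top⟩
      haveI hfinm : IsFiniteMeasure μm := ⟨by rw [hμm_univ]; exact ENNReal.ofReal_lt_top⟩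
      have hwdp : ∀ F : ℝ → ℝ≥0∞, Measurable F → ∫⁻ y, F y ∂μp = ∫⁻ y, Gp y * F y := by
        intro F hF
        rw [hμpdef, lintegral_withDensity_eq_lintegral_mul (volume : Measure ℝ) hGpm hF]
        simp only [Pi.mul_apply]
      have hwdm : ∀ F : ℝ → ℝ≥0∞, Measurable F → ∫⁻ y, F y ∂μm = ∫⁻ y, Gm y * F y := by
        intro F hF
        rw [hμmdef, lintegral_withDensity_eq_lintegral_mul (volume : Measure ℝ) hGmm hF]
        simp only [Pi.mul_apply]
      -- the pointwise (in x) coupling bound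
      have hpt : ∀ᵐ x ∂(volume : Measure ℝ),
          ENNReal.ofReal (D / 2) * ENNReal.ofReal |B x|
            ≤ ∫⁻ y1, ∫⁻ y2, ENNReal.ofReal |p (x - f0 y1) - p (x - f0 y2)| ∂μm ∂μp := by
        filter_upwards [haeint f0 hf0_meas ψf hψf_meas hψf_nonneg hΨ1,
          haeint f0 hf0_meas ψf0 hψf0_meas hψf0_nonneg hΨ01] with x h4 h5
        have hint_p : Integrable (fun y => p (x - f0 y) * gp y) (volume : Measure ℝ) := by
          refine h4.mono (((hp_meas.comp (measurable_const.sub hf0_meas)).mul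
            ((hψf_meas.sub hψf0_meas).max measurable_const)).aestronglyMeasurable)
            (Filter.Eventually.of_forall fun y => ?_)
          rw [Real.norm_eq_abs, Real.norm_eq_abs,
            abs_of_nonneg (mul_nonneg (hp_nonneg _) (hgp_nn y)),
            abs_of_nonneg (mul_nonneg (hp_nonneg _) (hψf_nonneg y))]
          refine mul_le_mul_of_nonneg_left ?_ (hp_nonneg _)
          exact max_le (by linarith [hψf0_nonneg y]) (hψf_nonneg y)
        have hint_m : Integrable (fun y => p (x - f0 y) * gm y) (volume : Measure ℝ) := by
          refine h5.mono (((hp_meas.comp (measurable_const.sub hf0_meas)).mul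
            ((hψf0_meas.sub hψf_meas).max measurable_const)).aestronglyMeasurable)
            (Filter.Eventually.of_forall fun y => ?_)
          rw [Real.norm_eq_abs, Real.norm_eq_abs,
            abs_of_nonneg (mul_nonneg (hp_nonneg _) (hgm_nn y)),
            abs_of_nonneg (mul_nonneg (hp_nonneg _) (hψf0_nonneg y))]
          refine mul_le_mul_of_nonneg_left ?_ (hp_nonneg _)
          exact max_le (by linarith [hψf_nonneg y]) (hψf0_nonneg y)
        set β := ∫ y, p (x - f0 y) * gp y with hβdef
        set γ := ∫ y, p (x - f0 y) * gm y with hγdef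
        have hβnn : 0 ≤ β := integral_nonneg fun y => mul_nonneg (hp_nonneg _) (hgp_nn y)
        have hγnn : 0 ≤ γ := integral_nonneg fun y => mul_nonneg (hp_nonneg _) (hgm_nn y)
        have hBx : B x = β - γ := by
          rw [hβdef, hγdef, ← integral_sub hint_p hint_m]
          simp only [hBdef]
          congr 1
          funext y
          rw [← hdiffpm y]
          ring
        have hPm1 : Measurable fun y : ℝ => ENNReal.ofReal (p (x - f0 y)) :=
          (hp_meas.comp (measurable_const.sub hf0_meas)).ennreal_ofReal
        have hu : ∫⁻ y, ENNReal.ofReal (p (x - f0 y)) ∂μp = ENNReal.ofReal β := by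
          rw [hwdp _ hPm1, hβdef, ofReal_integral_eq_lintegral_ofReal hint_p
            (Filter.Eventually.of_forall fun y => mul_nonneg (hp_nonneg _) (hgp_nn y))]
          refine lintegral_congr fun y => ?_
          rw [ENNReal.ofReal_mul (hp_nonneg _), hGpdef]
          simp only
          rw [mul_comm]
        have hv : ∫⁻ y, ENNReal.ofReal (p (x - f0 y)) ∂μm = ENNReal.ofReal γ := by
          rw [hwdm _ hPm1, hγdef, ofReal_integral_eq_lintegral_ofReal hint_m
            (Filter.Eventually.of_forall fun y => mul_nonneg (hp_nonneg _) (hgm_nn y))]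
          refine lintegral_congr fun y => ?_
          rw [ENNReal.ofReal_mul (hp_nonneg _), hGmdef]
          simp only
          rw [mul_comm]
        have hinner1 : ∀ y1 : ℝ,
            ENNReal.ofReal (p (x - f0 y1)) * ENNReal.ofReal (D / 2) - ENNReal.ofReal γ
              ≤ ∫⁻ y2, ENNReal.ofReal |p (x - f0 y1) - p (x - f0 y2)| ∂μm := by
          intro y1
          have e1 : ∫⁻ (_ : ℝ), ENNReal.ofReal (p (x - f0 y1)) ∂μm
              = ENNReal.ofReal (p (x - f0 y1)) * ENNReal.ofReal (D / 2) := by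
            rw [lintegral_const, hμm_univ]
          calc ENNReal.ofReal (p (x - f0 y1)) * ENNReal.ofReal (D / 2) - ENNReal.ofReal γ
              = (∫⁻ (_ : ℝ), ENNReal.ofReal (p (x - f0 y1)) ∂μm)
                - ∫⁻ y2, ENNReal.ofReal (p (x - f0 y2)) ∂μm := by rw [e1, hv]
            _ ≤ ∫⁻ y2, (ENNReal.ofReal (p (x - f0 y1)) - ENNReal.ofReal (p (x - f0 y2))) ∂μm :=
                lintegral_sub_le' _ _ hPm1.aemeasurable
            _ ≤ _ := by
                refine lintegral_mono fun y2 => ?_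
                rw [← ENNReal.ofReal_sub _ (hp_nonneg _)]
                exact ENNReal.ofReal_le_ofReal (le_abs_self _)
        have hinner2 : ∀ y1 : ℝ,
            ENNReal.ofReal γ - ENNReal.ofReal (p (x - f0 y1)) * ENNReal.ofReal (D / 2)
              ≤ ∫⁻ y2, ENNReal.ofReal |p (x - f0 y1) - p (x - f0 y2)| ∂μm := by
          intro y1
          have e1 : ∫⁻ (_ : ℝ), ENNReal.ofReal (p (x - f0 y1)) ∂μm
              = ENNReal.ofReal (p (x - f0 y1)) * ENNReal.ofReal (D / 2) := by
            rw [lintegral_const, hμm_univ]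
          calc ENNReal.ofReal γ - ENNReal.ofReal (p (x - f0 y1)) * ENNReal.ofReal (D / 2)
              = (∫⁻ y2, ENNReal.ofReal (p (x - f0 y2)) ∂μm)
                - ∫⁻ (_ : ℝ), ENNReal.ofReal (p (x - f0 y1)) ∂μm := by rw [e1, hv]
            _ ≤ ∫⁻ y2, (ENNReal.ofReal (p (x - f0 y2)) - ENNReal.ofReal (p (x - f0 y1))) ∂μm :=
                lintegral_sub_le' _ _ measurable_const.aemeasurable
            _ ≤ _ := by
                refine lintegral_mono fun y2 => ?_
                rw [← ENNReal.ofReal_sub _ (hp_nonneg _)]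
                refine ENNReal.ofReal_le_ofReal ?_
                exact (le_abs_self _).trans (le_of_eq (abs_sub_comm _ _))
        have e2 : ∫⁻ y1, ENNReal.ofReal (p (x - f0 y1)) * ENNReal.ofReal (D / 2) ∂μp
            = ENNReal.ofReal β * ENNReal.ofReal (D / 2) := by
          rw [lintegral_mul_const _ hPm1, hu]
        have houter1 : ENNReal.ofReal β * ENNReal.ofReal (D / 2)
              - ENNReal.ofReal (D / 2) * ENNReal.ofReal γ
            ≤ ∫⁻ y1, ∫⁻ y2, ENNReal.ofReal |p (x - f0 y1) - p (x - f0 y2)| ∂μm ∂μp := by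
          have e3 : ∫⁻ (_ : ℝ), ENNReal.ofReal γ ∂μp
              = ENNReal.ofReal (D / 2) * ENNReal.ofReal γ := by
            rw [lintegral_const, hμp_univ, mul_comm]
          calc ENNReal.ofReal β * ENNReal.ofReal (D / 2)
                - ENNReal.ofReal (D / 2) * ENNReal.ofReal γ
              = (∫⁻ y1, ENNReal.ofReal (p (x - f0 y1)) * ENNReal.ofReal (D / 2) ∂μp)
                - ∫⁻ (_ : ℝ), ENNReal.ofReal γ ∂μp := by rw [e2, e3]
            _ ≤ ∫⁻ y1, (ENNReal.ofReal (p (x - f0 y1)) * ENNReal.ofReal (D / 2)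
                - ENNReal.ofReal γ) ∂μp := lintegral_sub_le' _ _ measurable_const.aemeasurable
            _ ≤ _ := lintegral_mono hinner1
        have houter2 : ENNReal.ofReal γ * ENNReal.ofReal (D / 2)
              - ENNReal.ofReal (D / 2) * ENNReal.ofReal β
            ≤ ∫⁻ y1, ∫⁻ y2, ENNReal.ofReal |p (x - f0 y1) - p (x - f0 y2)| ∂μm ∂μp := by
          have e4 : ∫⁻ (_ : ℝ), ENNReal.ofReal γ ∂μp
              = ENNReal.ofReal γ * ENNReal.ofReal (D / 2) := by
            rw [lintegral_const, hμp_univ]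
          calc ENNReal.ofReal γ * ENNReal.ofReal (D / 2)
                - ENNReal.ofReal (D / 2) * ENNReal.ofReal β
              = (∫⁻ (_ : ℝ), ENNReal.ofReal γ ∂μp)
                - ∫⁻ y1, ENNReal.ofReal (p (x - f0 y1)) * ENNReal.ofReal (D / 2) ∂μp := by
                rw [e4, e2, mul_comm (ENNReal.ofReal (D / 2))]
            _ ≤ ∫⁻ y1, (ENNReal.ofReal γ
                - ENNReal.ofReal (p (x - f0 y1)) * ENNReal.ofReal (D / 2)) ∂μp :=
                lintegral_sub_le' _ _ (hPm1.mul measurable_const).aemeasurable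
            _ ≤ _ := lintegral_mono hinner2
        rcases le_total γ β with hc | hc
        · have habs : |B x| = β - γ := by rw [hBx, abs_of_nonneg (by linarith)]
          rw [habs, ENNReal.ofReal_sub _ hγnn,
            ENNReal.mul_sub (fun _ _ => ENNReal.ofReal_ne_top)]
          refine le_trans (le_of_eq ?_) houter1
          rw [mul_comm (ENNReal.ofReal (D / 2)) (ENNReal.ofReal β)]
        · have habs : |B x| = γ - β := by
            rw [hBx, abs_of_nonpos (by linarith), neg_sub]
          rw [habs, ENNReal.ofReal_sub _ hβnn,
            ENNReal.mul_sub (fun _ _ => ENNReal.ofReal_ne_top)]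
          refine le_trans (le_of_eq ?_) houter2
          rw [mul_comm (ENNReal.ofReal (D / 2)) (ENNReal.ofReal γ)]
      -- integrate the pointwise bound over x and cancel
      have hmB : Measurable fun x => ENNReal.ofReal |B x| :=
        (measurable_abs.comp hBm).ennreal_ofReal
      have hjointK : Measurable fun q : (ℝ × ℝ) × ℝ =>
          ENNReal.ofReal |p (q.1.1 - f0 q.1.2) - p (q.1.1 - f0 q.2)| := by
        apply Measurable.ennreal_ofReal
        apply Measurable.abs
        exact (hp_meas.comp ((measurable_fst.comp measurable_fst).sub
            (hf0_meas.comp (measurable_snd.comp measurable_fst)))).sub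
          (hp_meas.comp ((measurable_fst.comp measurable_fst).sub
            (hf0_meas.comp measurable_snd)))
      have hswap : ∫⁻ x, ∫⁻ y1, ∫⁻ y2,
            ENNReal.ofReal |p (x - f0 y1) - p (x - f0 y2)| ∂μm ∂μp
          ≤ ENNReal.ofReal (2 * ρ) * (ENNReal.ofReal (D / 2) * ENNReal.ofReal (D / 2)) := by
        have hmz : Measurable fun z : ℝ × ℝ =>
            ∫⁻ y2, ENNReal.ofReal |p (z.1 - f0 z.2) - p (z.1 - f0 y2)| ∂μm :=
          hjointK.lintegral_prod_right'
        rw [lintegral_lintegral_swap hmz.aemeasurable]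
        have hyswap : ∀ y1 : ℝ,
            (∫⁻ x, ∫⁻ y2, ENNReal.ofReal |p (x - f0 y1) - p (x - f0 y2)| ∂μm)
              = ∫⁻ y2, (∫⁻ x, ENNReal.ofReal |p (x - f0 y1) - p (x - f0 y2)|) ∂μm := by
          intro y1
          apply lintegral_lintegral_swap
          apply Measurable.aemeasurable
          exact (((hp_meas.comp (measurable_fst.sub measurable_const)).sub
            (hp_meas.comp (measurable_fst.sub
              (hf0_meas.comp measurable_snd)))).abs).ennreal_ofReal
        calc ∫⁻ y1, (∫⁻ x, ∫⁻ y2, ENNReal.ofReal |p (x - f0 y1) - p (x - f0 y2)| ∂μm) ∂μp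
            = ∫⁻ y1, ∫⁻ y2, (∫⁻ x, ENNReal.ofReal |p (x - f0 y1) - p (x - f0 y2)|) ∂μm ∂μp :=
              lintegral_congr fun y1 => hyswap y1
          _ ≤ ∫⁻ y1, ∫⁻ y2, ENNReal.ofReal (2 * ρ) ∂μm ∂μp := by
              refine lintegral_mono fun y1 => lintegral_mono fun y2 => ?_
              rw [← ofReal_integral_eq_lintegral_ofReal (hT_int (f0 y1) (f0 y2))
                (Filter.Eventually.of_forall fun x => abs_nonneg _)]
              exact ENNReal.ofReal_le_ofReal (hρ2 _ _ (hf0_bdd y1) (hf0_bdd y2))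
          _ = ENNReal.ofReal (2 * ρ) * (ENNReal.ofReal (D / 2) * ENNReal.ofReal (D / 2)) := by
              simp only [lintegral_const]
              rw [hμm_univ, hμp_univ, mul_assoc]
      have hmain : ENNReal.ofReal (D / 2) * ∫⁻ x, ENNReal.ofReal |B x|
          ≤ ENNReal.ofReal (D / 2) * (ENNReal.ofReal (2 * ρ) * ENNReal.ofReal (D / 2)) := by
        calc ENNReal.ofReal (D / 2) * ∫⁻ x, ENNReal.ofReal |B x|
            = ∫⁻ x, ENNReal.ofReal (D / 2) * ENNReal.ofReal |B x| :=
              (lintegral_const_mul _ hmB).symm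
          _ ≤ ∫⁻ x, ∫⁻ y1, ∫⁻ y2,
                ENNReal.ofReal |p (x - f0 y1) - p (x - f0 y2)| ∂μm ∂μp :=
              lintegral_mono_ae hpt
          _ ≤ ENNReal.ofReal (2 * ρ) * (ENNReal.ofReal (D / 2) * ENNReal.ofReal (D / 2)) := hswap
          _ = ENNReal.ofReal (D / 2) * (ENNReal.ofReal (2 * ρ) * ENNReal.ofReal (D / 2)) := by
              ring
      have hne0 : ENNReal.ofReal (D / 2) ≠ 0 := by
        simp only [ne_eq, ENNReal.ofReal_eq_zero, not_le]
        linarith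
      have hcancel : ∫⁻ x, ENNReal.ofReal |B x|
          ≤ ENNReal.ofReal (2 * ρ) * ENNReal.ofReal (D / 2) :=
        (ENNReal.mul_le_mul_iff_right hne0 ENNReal.ofReal_ne_top).mp hmain
      calc ∫⁻ x, ENNReal.ofReal |B x|
          ≤ ENNReal.ofReal (2 * ρ) * ENNReal.ofReal (D / 2) := hcancel
        _ = ENNReal.ofReal ρ * ENNReal.ofReal D := by
            rw [← ENNReal.ofReal_mul (by linarith : (0:ℝ) ≤ 2 * ρ),
              ← ENNReal.ofReal_mul hρ_nonneg]
            congr 1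
            ring
  -- combine
  have hDe : ENNReal.ofReal D = ∫⁻ x, ENNReal.ofReal |ψf x - ψf0 x| :=
    ofReal_integral_eq_lintegral_ofReal hg_int.abs
      (Filter.Eventually.of_forall fun x => abs_nonneg _)
  have hkey : ENNReal.ofReal D ≤ ENNReal.ofReal S + ENNReal.ofReal ρ * ENNReal.ofReal D := by
    calc ENNReal.ofReal D = ∫⁻ x, ENNReal.ofReal |ψf x - ψf0 x| := hDe
      _
        ≤ ∫⁻ x, (ENNReal.ofReal |A x| + ENNReal.ofReal |B x|) := by
          refine lintegral_mono_ae ?_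
          filter_upwards [hdecomp] with x hx
          rw [hx, ← ENNReal.ofReal_add (abs_nonneg _) (abs_nonneg _)]
          exact ENNReal.ofReal_le_ofReal (abs_add_le _ _)
      _ = (∫⁻ x, ENNReal.ofReal |A x|) + ∫⁻ x, ENNReal.ofReal |B x| :=
          lintegral_add_left ((measurable_abs.comp hAm).ennreal_ofReal) _
      _ ≤ ENNReal.ofReal S + ENNReal.ofReal ρ * ENNReal.ofReal D := add_le_add hA hB
  have hreal : D ≤ S + ρ * D := by
    have h1 : ENNReal.ofReal S + ENNReal.ofReal ρ * ENNReal.ofReal D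
        = ENNReal.ofReal (S + ρ * D) := by
      rw [ENNReal.ofReal_add hS_nonneg (mul_nonneg hρ_nonneg hD_nonneg),
        ENNReal.ofReal_mul hρ_nonneg]
    rw [h1] at hkey
    exact (ENNReal.ofReal_le_ofReal_iff
      (by nlinarith : (0:ℝ) ≤ S + ρ * D)).mp hkey
  have h1ρ : 0 < 1 - ρ := by linarith
  have h2 : (1 - ρ) * D ≤ S := by nlinarith
  calc D = (1 - ρ)⁻¹ * ((1 - ρ) * D) := by field_simp
    _ ≤ (1 - ρ)⁻¹ * S := by
        exact mul_le_mul_of_nonneg_left h2 (by positivity)
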